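/- Let $\alpha \in [0,1)$ and consider a sequence $(a_t)_{t \geq 0}$ of nonnegative reals with $a_0 = 0$ satisfying the recursion $a_{t+1} \leq \frac{1+\alpha}{2} a_t + D + \frac{1-\alpha}{3}(1-\beta)\sum_{s=1}^{t} \beta^{t-s} a_s$ for all $t \geq 0$, where $D \geq 0$ and $\beta \in [0,1)$. Then $a_t \leq \frac{6D}{1-\alpha}$ for all $t \geq 0$. -/

import Mathlib

open Finset

theorem drift_recursion_bound (α β D : ℝ) (hα0 : 0 ≤ α) (hα1 : α < 1)
    (hβ0 : 0 ≤ β) (hβ1 : β < 1) (hD : 0 ≤ D)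
    (a : ℕ → ℝ) (ha : ∀ t, 0 ≤ a t) (ha0 : a 0 = 0)
    (hrec : ∀ t, a (t + 1) ≤ (1 + α) / 2 * a t + D +
      (1 - α) / 3 * (1 - β) * ∑ s ∈ Finset.Icc 1 t, β ^ (t - s) * a s) :
    ∀ t, a t ≤ 6 * D / (1 - α) := by
  have hβ' : 0 < 1 - β := by linarith
  have hα' : 0 < 1 - α := by linarith
  set B := 6 * D / (1 - α) with hBdef
  have hB : 0 ≤ B := div_nonneg (by linarith) hα'.le
  have hS : ∀ t, ∑ s ∈ Finset.Icc 1 t, β ^ (t - s) ≤ 1 / (1 - β) := by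
    intro t
    induction t with
    | zero => simp; linarith
    | succ n ih =>
      rw [Finset.sum_Icc_succ_top (by omega : 1 ≤ n + 1)]
      have h1 : ∑ s ∈ Finset.Icc 1 n, β ^ (n + 1 - s)
          = β * ∑ s ∈ Finset.Icc 1 n, β ^ (n - s) := by
        rw [Finset.mul_sum]
        apply Finset.sum_congr rfl
        intro s hs
        have hs' : 1 ≤ s ∧ s ≤ n := Finset.mem_Icc.mp hs
        rw [← pow_succ']
        congr 1
        omega
      have h2 : β ^ (n + 1 - (n + 1)) = 1 := by simp
      rw [h1, h2]
      have h3 : β * ∑ s ∈ Finset.Icc 1 n, β ^ (n - s) ≤ β * (1 / (1 - β)) :=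
        mul_le_mul_of_nonneg_left ih hβ0
      have h4 : β * (1 / (1 - β)) + 1 = 1 / (1 - β) := by field_simp; ring
      linarith
  intro t
  induction t using Nat.strong_induction_on with
  | _ t ih =>
    match t with
    | 0 => rw [ha0]; exact hB
    | Nat.succ n =>
      have h1 := hrec n
      have hsum : ∑ s ∈ Finset.Icc 1 n, β ^ (n - s) * a s ≤ B * (1 / (1 - β)) := by
        calc ∑ s ∈ Finset.Icc 1 n, β ^ (n - s) * a s
            ≤ ∑ s ∈ Finset.Icc 1 n, β ^ (n - s) * B := by
              apply Finset.sum_le_sum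
              intro s hs
              have hs' : 1 ≤ s ∧ s ≤ n := Finset.mem_Icc.mp hs
              exact mul_le_mul_of_nonneg_left (ih s (by omega)) (pow_nonneg hβ0 _)
          _ = (∑ s ∈ Finset.Icc 1 n, β ^ (n - s)) * B := by rw [Finset.sum_mul]
          _ ≤ (1 / (1 - β)) * B := mul_le_mul_of_nonneg_right (hS n) hB
          _ = B * (1 / (1 - β)) := mul_comm _ _
      have han : a n ≤ B := ih n (Nat.lt_succ_self n)
      have t1 : (1 + α) / 2 * a n ≤ (1 + α) / 2 * B :=
        mul_le_mul_of_nonneg_left han (by linarith)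
      have t2 : (1 - α) / 3 * (1 - β) * (∑ s ∈ Finset.Icc 1 n, β ^ (n - s) * a s)
          ≤ (1 - α) / 3 * (1 - β) * (B * (1 / (1 - β))) :=
        mul_le_mul_of_nonneg_left hsum (by positivity)
      have key : (1 - α) / 3 * (1 - β) * (B * (1 / (1 - β))) = (1 - α) / 3 * B := by
        field_simp
      have hBeq : (1 + α) / 2 * B + D + (1 - α) / 3 * B = B := by
        rw [hBdef]
        field_simp
        ring
      linarith
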